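/- arXiv:2605.21732 — 2 statements merged into one kernel-verified Lean document; each statement's English description precedes it below -/
import Mathlib

section
/- Let X be a normed linear space and K ⊆ X a cone (a closed convex set with λu ∈ K for all u ∈ K, λ ≥ 0, and K ∩ (−K) = {0}). Then K is a retract of X, i.e., there exists a continuous map ρ : X → K with ρ(u) = u for all u ∈ K. -/
open Set Metric

/-- A cone (closed convex set, closed under nonnegative scaling, with
`K ∩ (-K) = {0}`) in a normed linear space is a retract of the space. -/
theorem cone_is_retract
    {X : Type*} [NormedAddCommGroup X] [NormedSpace ℝ X]
    (K : Set X)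
    (hclosed : IsClosed K)
    (hconvex : Convex ℝ K)
    (hscale : ∀ u ∈ K, ∀ (l : ℝ), 0 ≤ l → l • u ∈ K)
    (hpointed : K ∩ (-K) = {0}) :
    ∃ ρ : X → X, Continuous ρ ∧ (∀ x, ρ x ∈ K) ∧ (∀ u ∈ K, ρ u = u) := by
  classical
  have h0K : (0 : X) ∈ K := by
    have h : (0 : X) ∈ K ∩ (-K) := by rw [hpointed]; exact rfl
    exact h.1
  have hne : K.Nonempty := ⟨0, h0K⟩
  -- the complement as a subtype
  set U : Set X := Kᶜ with hUdef
  -- the distance to `K` is positive on `U`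
  have hr : ∀ c : U, 0 < infDist (c : X) K := fun c =>
    (hclosed.notMem_iff_infDist_pos hne).mp c.2
  -- choose nearby points in `K`
  have hA : ∀ c : U, ∃ y ∈ K, dist (c : X) y < 2 * infDist (c : X) K := fun c =>
    (infDist_lt_iff hne).mp (lt_two_mul_self (hr c))
  choose a haK hadist using hA
  -- the cover of `U` by small balls
  set V : U → Set U := fun c => Subtype.val ⁻¹' ball (c : X) (infDist (c : X) K / 4) with hVdef
  have hVopen : ∀ c, IsOpen (V c) := fun c => isOpen_ball.preimage continuous_subtype_val
  have hVcover : (univ : Set U) ⊆ ⋃ c, V c := fun y _ =>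
    mem_iUnion.2 ⟨y, mem_ball_self (by have := hr y; linarith)⟩
  obtain ⟨f, hf⟩ :=
    PartitionOfUnity.exists_isSubordinate (s := (univ : Set U)) isClosed_univ V hVopen hVcover
  -- the retraction
  set ρ : X → X := fun x => if h : x ∈ K then x else ∑ᶠ c : U, f c (⟨x, h⟩ : U) • a c with hρdef
  have hρK : ∀ u ∈ K, ρ u = u := fun u hu => dif_pos hu
  -- rewrite the value at points outside `K` as a finite sum
  have hval : ∀ (x : X) (h : x ∉ K),
      ρ x = ∑ i ∈ f.finsupport (⟨x, h⟩ : U), f i (⟨x, h⟩ : U) • a i := by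
    intro x h
    have := f.sum_finsupport_smul_eq_finsum (x₀ := (⟨x, h⟩ : U)) (fun i _ => a i)
    simp only [hρdef, dif_neg h]
    exact this.symm
  -- values lie in `K`
  have hmem : ∀ x, ρ x ∈ K := by
    intro x
    by_cases h : x ∈ K
    · rw [hρK x h]; exact h
    · rw [hval x h]
      exact hconvex.sum_mem (fun i _ => f.nonneg i _)
        (f.sum_finsupport (mem_univ _)) (fun i _ => haK i)
  -- the key estimate: `‖ρ x - b‖ ≤ 4 * dist x b` for every `b ∈ K`
  have hest : ∀ (b : X), b ∈ K → ∀ x, dist (ρ x) b ≤ 4 * dist x b := by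
    intro b hb x
    by_cases h : x ∈ K
    · rw [hρK x h]
      have := dist_nonneg (x := x) (y := b)
      linarith
    · set y : U := ⟨x, h⟩ with hy
      set s := f.finsupport y with hs
      have hsum1 : ∑ i ∈ s, f i y = 1 := f.sum_finsupport (mem_univ _)
      have hterm : ∀ i ∈ s, ‖a i - b‖ ≤ 4 * dist x b := by
        intro i hi
        have hiy : f i y ≠ 0 := (f.mem_finsupport y).mp hi
        have hysupp : y ∈ tsupport (f i) := subset_tsupport _ hiy
        have hyV : y ∈ V i := hf i hysupp
        have hball : dist x (i : X) < infDist (i : X) K / 4 := by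
          have hyV' : dist (y : X) (i : X) < infDist (i : X) K / 4 := hyV
          exact hyV'
        set R : ℝ := infDist (i : X) K with hR
        have h1 : R ≤ infDist x K + dist (i : X) x :=
          infDist_le_infDist_add_dist
        have h2 : infDist x K ≤ dist x b := infDist_le_dist_of_mem hb
        have h3 : dist (i : X) x < R / 4 := by rwa [dist_comm]
        have hRle : R ≤ 4 / 3 * dist x b := by linarith
        have h4 : dist (i : X) (a i) < 2 * R := hadist i
        calc ‖a i - b‖ = dist (a i) b := (dist_eq_norm _ _).symm
          _ ≤ dist (a i) (i : X) + dist (i : X) x + dist x b := dist_triangle4 _ _ _ _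
          _ = dist (i : X) (a i) + dist (i : X) x + dist x b := by rw [dist_comm]
          _ ≤ 2 * R + R / 4 + dist x b := by linarith
          _ ≤ 4 * dist x b := by linarith
      have hsub : ρ x - b = ∑ i ∈ s, f i y • (a i - b) := by
        rw [hval x h]
        simp only [smul_sub, Finset.sum_sub_distrib, ← Finset.sum_smul, hsum1, one_smul]
        rfl
      rw [dist_eq_norm, hsub]
      calc ‖∑ i ∈ s, f i y • (a i - b)‖ ≤ ∑ i ∈ s, ‖f i y • (a i - b)‖ :=
            norm_sum_le _ _
        _ ≤ ∑ i ∈ s, f i y * (4 * dist x b) := by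
            refine Finset.sum_le_sum fun i hi => ?_
            rw [norm_smul, Real.norm_eq_abs, abs_of_nonneg (f.nonneg i y)]
            exact mul_le_mul_of_nonneg_left (hterm i hi) (f.nonneg i y)
        _ = 4 * dist x b := by rw [← Finset.sum_mul, hsum1, one_mul]
  -- continuity
  have hcont : Continuous ρ := by
    rw [continuous_iff_continuousAt]
    intro x₀
    by_cases h : x₀ ∈ K
    · -- continuity at points of `K` via the estimate
      have hρx₀ : ρ x₀ = x₀ := hρK x₀ h
      rw [ContinuousAt, hρx₀, tendsto_iff_dist_tendsto_zero]
      refine squeeze_zero (fun x => dist_nonneg) (fun x => hest x₀ h x) ?_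
      have : Continuous fun x : X => 4 * dist x x₀ :=
        continuous_const.mul (continuous_id.dist continuous_const)
      have h0 : (fun x : X => 4 * dist x x₀) x₀ = 0 := by simp
      simpa [h0] using this.tendsto x₀
    · -- continuity at points of `Kᶜ` via the partition of unity
      have hG : Continuous fun y : U => ∑ᶠ c : U, f c y • a c :=
        f.continuous_finsum_smul (g := fun c _ => a c) (fun i x _ => continuousAt_const)
      have hrestrict : U.domRestrict ρ = fun y : U => ∑ᶠ c : U, f c y • a c := by
        funext y
        simp only [domRestrict_apply, hρdef, dif_neg y.2]
      have hcontOn : ContinuousOn ρ U := by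
        rw [continuousOn_iff_continuous_restrict, hrestrict]
        exact hG
      exact hcontOn.continuousAt (hclosed.isOpen_compl.mem_nhds h)
  exact ⟨ρ, hcont, hmem, hρK⟩
end

section
/- Define h : [4,∞) → ℝ by h(z) = (s(z)/s̃(z))·e^{√(z(z−4))} − 4/3, where s(z) = ((z−2) − √(z(z−4)))/2 and s̃(z) = ((z−2) + √(z(z−4)))/2. Then h is monotone increasing on [4,∞), h(4) = 1 − 4/3 < 0, and h(z) > 0 for all z ≥ 5; in particular h has a unique zero z₀ ∈ (4,5). -/
open Set Real

noncomputable def gaux : ℝ → ℝ := fun z =>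
  (((z - 2) - Real.sqrt (z * (z - 4))) / 2) ^ 2 * Real.exp (Real.sqrt (z * (z - 4))) - 4/3

lemma gaux_cont : Continuous gaux := by
  unfold gaux; fun_prop

lemma gaux_deriv {z : ℝ} (hz : 4 < z) :
    HasDerivAt gaux (Real.exp (Real.sqrt (z * (z - 4))) *
      (((z - 2) - Real.sqrt (z * (z - 4))) ^ 2 * (z - 4)) / (4 * Real.sqrt (z * (z - 4)))) z := by
  have hqpos : 0 < z * (z - 4) := by nlinarith
  have hq : HasDerivAt (fun z : ℝ => z * (z - 4)) (1 * (z - 4) + z * 1) z :=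
    (hasDerivAt_id z).mul ((hasDerivAt_id z).sub_const 4)
  have hT : HasDerivAt (fun z : ℝ => Real.sqrt (z * (z - 4)))
      (1 / (2 * Real.sqrt (z * (z - 4))) * (1 * (z - 4) + z * 1)) z :=
    (Real.hasDerivAt_sqrt (ne_of_gt hqpos)).comp z hq
  have hs : HasDerivAt (fun z : ℝ => ((z - 2) - Real.sqrt (z * (z - 4))) / 2)
      ((1 - 1 / (2 * Real.sqrt (z * (z - 4))) * (1 * (z - 4) + z * 1)) / 2) z :=
    (((hasDerivAt_id z).sub_const 2).sub hT).div_const 2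
  have hg := (((hs.pow 2).mul hT.exp).sub_const (4/3 : ℝ))
  convert hg using 1
  · rfl
  · rfl
  · rfl
  simp only [Pi.pow_apply]
  set t := Real.sqrt (z * (z - 4)) with ht
  have htpos : 0 < t := Real.sqrt_pos.2 hqpos
  field_simp
  ring_nf

lemma gaux_mono : StrictMonoOn gaux (Ici 4) := by
  apply strictMonoOn_of_deriv_pos (convex_Ici 4) gaux_cont.continuousOn
  intro x hx
  rw [interior_Ici] at hx
  have hx' : (4:ℝ) < x := hx
  rw [(gaux_deriv hx').deriv]
  have hqpos : 0 < x * (x - 4) := by nlinarith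
  have htpos : 0 < Real.sqrt (x * (x - 4)) := Real.sqrt_pos.2 hqpos
  have ht2 : Real.sqrt (x * (x - 4)) ^ 2 = x * (x - 4) := Real.sq_sqrt hqpos.le
  have hlt : Real.sqrt (x * (x - 4)) < x - 2 := by
    nlinarith [ht2, htpos]
  have h1 : 0 < ((x - 2) - Real.sqrt (x * (x - 4))) ^ 2 :=
    pow_pos (by linarith) 2
  have := Real.exp_pos (Real.sqrt (x * (x - 4)))
  apply div_pos
  · apply mul_pos this (mul_pos h1 (by linarith))
  · linarith

/-- The auxiliary function `h(z) = (s(z)/s̃(z)) e^{√(z(z-4))} - 4/3` on `[4,∞)`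
is increasing, negative at `4` (where it equals `1 - 4/3`), positive for
`z ≥ 5`, and hence has a unique zero in `(4,5)`. -/
theorem aux_function_h_zero
    (s st h : ℝ → ℝ)
    (hsdef : ∀ z, s z = ((z - 2) - Real.sqrt (z * (z - 4))) / 2)
    (hstdef : ∀ z, st z = ((z - 2) + Real.sqrt (z * (z - 4))) / 2)
    (hdef : ∀ z, h z = (s z / st z) * Real.exp (Real.sqrt (z * (z - 4))) - 4/3) :
    StrictMonoOn h (Ici 4) ∧
    h 4 = 1 - 4/3 ∧ h 4 < 0 ∧
    (∀ z : ℝ, 5 ≤ z → 0 < h z) ∧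
    (∃! z₀ : ℝ, z₀ ∈ Ioo (4:ℝ) 5 ∧ h z₀ = 0) := by
  -- h = gaux on Ici 4
  have hEq : EqOn h gaux (Ici 4) := by
    intro z hz
    have hz4 : (4:ℝ) ≤ z := hz
    have hq : 0 ≤ z * (z - 4) := by nlinarith
    set t := Real.sqrt (z * (z - 4)) with ht
    have ht2 : t ^ 2 = z * (z - 4) := Real.sq_sqrt hq
    have htnn : 0 ≤ t := Real.sqrt_nonneg _
    have hstne : (z - 2) + t ≠ 0 := by intro hc; nlinarith
    rw [hdef, hsdef, hstdef]
    show (((z - 2) - t) / 2) / (((z - 2) + t) / 2) * Real.exp t - 4/3 =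
      (((z - 2) - t) / 2) ^ 2 * Real.exp t - 4/3
    have key : (((z - 2) - t) / 2) / (((z - 2) + t) / 2) = (((z - 2) - t) / 2) ^ 2 := by
      rw [div_div_div_eq]
      field_simp
      nlinarith [ht2]
    rw [key]
  have hmono : StrictMonoOn h (Ici 4) := by
    intro a ha b hb hab
    rw [hEq ha, hEq hb]; exact gaux_mono ha hb hab
  have h4 : h 4 = 1 - 4/3 := by
    rw [hdef, hsdef, hstdef]
    norm_num
  have h4neg : h 4 < 0 := by rw [h4]; norm_num
  have h5pos : 0 < h 5 := by
    rw [hEq (by norm_num : (5:ℝ) ∈ Ici 4)]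
    unfold gaux
    have h54 : (5:ℝ) * (5 - 4) = 5 := by norm_num
    rw [h54]
    set r := Real.sqrt 5 with hrdef
    have hr2 : r ^ 2 = 5 := Real.sq_sqrt (by norm_num)
    have hrnn : 0 ≤ r := Real.sqrt_nonneg _
    have hru : r < 2.23607 := by nlinarith
    have hrl : 2.236 < r := by nlinarith
    have hE : (9.27:ℝ) ≤ Real.exp 2.236 := by
      have := Real.sum_le_exp_of_nonneg (by norm_num : (0:ℝ) ≤ 2.236) 7
      refine le_trans ?_ this
      simp [Finset.sum_range_succ, Nat.factorial]
      norm_num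
    have hE' : (9.27:ℝ) ≤ Real.exp r := le_trans hE (Real.exp_le_exp.2 hrl.le)
    have hEpos : 0 < Real.exp r := Real.exp_pos r
    nlinarith [hE', hru, hrl, hr2, mul_le_mul_of_nonneg_left hE'
      (by nlinarith : (0:ℝ) ≤ ((5 - 2 - r)/2)^2)]
  have hpos : ∀ z : ℝ, 5 ≤ z → 0 < h z := by
    intro z hz
    rcases eq_or_lt_of_le hz with hz' | hz'
    · rw [← hz']; exact h5pos
    · exact lt_trans h5pos (hmono (by norm_num) (by norm_num; linarith) hz')
  refine ⟨hmono, h4, h4neg, hpos, ?_⟩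
  -- existence via IVT
  have hIcc : Icc (4:ℝ) 5 ⊆ Ici 4 := fun x hx => hx.1
  have hcont : ContinuousOn h (Icc (4:ℝ) 5) :=
    (gaux_cont.continuousOn.mono hIcc).congr (hEq.mono hIcc)
  have hmem : (0:ℝ) ∈ Ioo (h 4) (h 5) := ⟨h4neg, h5pos⟩
  obtain ⟨z₀, hz₀mem, hz₀⟩ := intermediate_value_Ioo (by norm_num : (4:ℝ) ≤ 5) hcont hmem
  refine ⟨z₀, ⟨hz₀mem, hz₀⟩, ?_⟩
  intro y ⟨hymem, hy⟩
  have hyI : y ∈ Ici (4:ℝ) := le_of_lt hymem.1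
  have hz₀I : z₀ ∈ Ici (4:ℝ) := le_of_lt hz₀mem.1
  exact hmono.injOn hyI hz₀I (by rw [hy, hz₀])
end
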